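/- arXiv:1112.6142 — 2 statements merged into one kernel-verified Lean document; each statement's English description precedes it below -/
import Mathlib

section
/- Consider all real sequences (G_n)_{n≥1} satisfying G_n = G_{n-1} + G_{n-2} for n ≥ 3 (equivalently, all choices of real G_1, G_2). Then: the supremum over such sequences of min_{n=1,2} ‖G_n‖ equals 1/2; the supremum of min_{n=1,2,3} ‖G_n‖ equals 1/3; the supremum of min_{n=1,2,3,4} ‖G_n‖ equals 1/4; and the supremum of min_{n=1,...,5} ‖G_n‖ equals 1/4. Each of these suprema is attained. -/
/-- Distance from a real number to the nearest integer. -/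
noncomputable def distNearestInt (x : ℝ) : ℝ := |x - round x|

lemma dni_le_abs_sub (x : ℝ) (m : ℤ) : distNearestInt x ≤ |x - m| := by
  unfold distNearestInt
  rw [abs_sub_round_eq_min]
  have h : x - m = ((⌊x⌋ - m : ℤ) : ℝ) + Int.fract x := by
    rw [Int.fract]; push_cast; ring
  have hf0 := Int.fract_nonneg x
  have hf1 := Int.fract_lt_one x
  rcases le_or_gt 0 (⌊x⌋ - m : ℤ) with h0 | h0
  · have h0' : (0:ℝ) ≤ ((⌊x⌋ - m : ℤ) : ℝ) := by exact_mod_cast h0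
    calc min (Int.fract x) (1 - Int.fract x) ≤ Int.fract x := min_le_left _ _
      _ ≤ |x - m| := by rw [h, abs_of_nonneg (by linarith)]; linarith
  · have h0' : ((⌊x⌋ - m : ℤ) : ℝ) ≤ -1 := by
      have : (⌊x⌋ - m : ℤ) ≤ -1 := by omega
      exact_mod_cast this
    calc min (Int.fract x) (1 - Int.fract x) ≤ 1 - Int.fract x := min_le_right _ _
      _ ≤ |x - m| := by rw [h, abs_of_nonpos (by linarith)]; linarith

lemma dni_shift (x : ℝ) (k : ℤ) : distNearestInt (x + k) = distNearestInt x := by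
  unfold distNearestInt
  rw [round_add_intCast]
  push_cast
  ring_nf

lemma dni_half (x : ℝ) : distNearestInt x ≤ 1/2 := abs_sub_round x

lemma real3 (p q : ℝ) (hp1 : 1/3 < |p|) (hp2 : |p| ≤ 1/2)
    (hq1 : 1/3 < |q|) (hq2 : |q| ≤ 1/2)
    (hs0 : 1/3 < |p + q|) (hs1 : 1/3 < |p + q - 1|) (hsm1 : 1/3 < |p + q + 1|) : False := by
  rw [lt_abs] at hp1 hq1 hs0 hs1 hsm1
  rw [abs_le] at hp2 hq2
  obtain ⟨hp2a, hp2b⟩ := hp2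
  obtain ⟨hq2a, hq2b⟩ := hq2
  rcases hp1 with hp | hp <;> rcases hq1 with hq | hq <;>
    rcases hs0 with h | h <;> rcases hs1 with h' | h' <;> rcases hsm1 with h'' | h'' <;>
    linarith

lemma real4 (p q : ℝ) (hp1 : 1/4 < |p|) (hp2 : |p| ≤ 1/2)
    (hq1 : 1/4 < |q|) (hq2 : |q| ≤ 1/2)
    (hs0 : 1/4 < |p + q|) (hs1 : 1/4 < |p + q - 1|) (hsm1 : 1/4 < |p + q + 1|)
    (ht1 : 1/4 < |p + q + q - 1|) (htm1 : 1/4 < |p + q + q + 1|) : False := by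
  rw [lt_abs] at hp1 hq1 hs0 hs1 hsm1 ht1 htm1
  rw [abs_le] at hp2 hq2
  obtain ⟨hp2a, hp2b⟩ := hp2
  obtain ⟨hq2a, hq2b⟩ := hq2
  rcases hp1 with hp | hp <;> rcases hq1 with hq | hq
  · -- p > 1/4, q > 1/4
    rcases hs1 with h | h
    · linarith
    · rcases ht1 with g | g <;> linarith
  · -- p > 1/4, q < -1/4
    rcases hs0 with h | h <;> linarith
  · -- p < -1/4, q > 1/4
    rcases hs0 with h | h <;> linarith
  · -- p < -1/4, q < -1/4
    rcases hsm1 with h | h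
    · rcases htm1 with g | g <;> linarith
    · linarith

lemma key3 (a b : ℝ) :
    distNearestInt a ≤ 1/3 ∨ distNearestInt b ≤ 1/3 ∨ distNearestInt (a + b) ≤ 1/3 := by
  by_contra h
  push_neg at h
  obtain ⟨ha, hb, hs⟩ := h
  set p := a - round a with hp
  set q := b - round b with hq
  have hab : a + b = (p + q) + (((round a : ℤ) + (round b : ℤ) : ℤ) : ℝ) := by push_cast; ring
  have hs' : 1/3 < distNearestInt (p + q) := by
    rw [← dni_shift (p+q) ((round a) + (round b)), ← hab]; exact hs
  have h0 : (1:ℝ)/3 < |p + q| := by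
    have := dni_le_abs_sub (p+q) 0; push_cast at this; simp only [sub_zero] at this; linarith
  have h1 : (1:ℝ)/3 < |p + q - 1| := by
    have := dni_le_abs_sub (p+q) 1; push_cast at this; linarith
  have hm1 : (1:ℝ)/3 < |p + q + 1| := by
    have := dni_le_abs_sub (p+q) (-1); push_cast at this
    rw [sub_neg_eq_add] at this; linarith
  exact real3 p q ha (abs_sub_round a) hb (abs_sub_round b) h0 h1 hm1

lemma key4 (a b : ℝ) :
    distNearestInt a ≤ 1/4 ∨ distNearestInt b ≤ 1/4 ∨ distNearestInt (a + b) ≤ 1/4 ∨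
      distNearestInt (a + b + b) ≤ 1/4 := by
  by_contra h
  push_neg at h
  obtain ⟨ha, hb, hs, ht⟩ := h
  set p := a - round a with hp
  set q := b - round b with hq
  have hab : a + b = (p + q) + (((round a : ℤ) + (round b : ℤ) : ℤ) : ℝ) := by push_cast; ring
  have hab2 : a + b + b = (p + q + q) + (((round a : ℤ) + 2 * (round b : ℤ) : ℤ) : ℝ) := by
    push_cast; ring
  have hs' : 1/4 < distNearestInt (p + q) := by
    rw [← dni_shift (p+q) ((round a) + (round b)), ← hab]; exact hs
  have ht' : 1/4 < distNearestInt (p + q + q) := by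
    rw [← dni_shift (p+q+q) ((round a) + 2 * (round b)), ← hab2]; exact ht
  have h0 : (1:ℝ)/4 < |p + q| := by
    have := dni_le_abs_sub (p+q) 0; push_cast at this; simp only [sub_zero] at this; linarith
  have h1 : (1:ℝ)/4 < |p + q - 1| := by
    have := dni_le_abs_sub (p+q) 1; push_cast at this; linarith
  have hm1 : (1:ℝ)/4 < |p + q + 1| := by
    have := dni_le_abs_sub (p+q) (-1); push_cast at this
    rw [sub_neg_eq_add] at this; linarith
  have g1 : (1:ℝ)/4 < |p + q + q - 1| := by
    have := dni_le_abs_sub (p+q+q) 1; push_cast at this; linarith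
  have gm1 : (1:ℝ)/4 < |p + q + q + 1| := by
    have := dni_le_abs_sub (p+q+q) (-1); push_cast at this
    rw [sub_neg_eq_add] at this; linarith
  exact real4 p q ha (abs_sub_round a) hb (abs_sub_round b) h0 h1 hm1 g1 gm1

lemma fibG_rec (c : ℝ) : ∀ n, 3 ≤ n →
    (fun n => (Nat.fib n : ℝ) / c) n
      = (fun n => (Nat.fib n : ℝ) / c) (n - 1) + (fun n => (Nat.fib n : ℝ) / c) (n - 2) := by
  intro n hn
  obtain ⟨m, rfl⟩ : ∃ m, n = m + 3 := ⟨n - 3, by omega⟩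
  simp only
  have h1 : (m + 3) - 1 = m + 2 := by omega
  have h2 : (m + 3) - 2 = m + 1 := by omega
  rw [h1, h2, show m + 3 = (m + 1) + 2 from rfl, Nat.fib_add_two]
  push_cast
  ring

theorem fib_like_min_small_cases :
    IsGreatest {y : ℝ | ∃ G : ℕ → ℝ, (∀ n, 3 ≤ n → G n = G (n - 1) + G (n - 2)) ∧
      y = (Finset.Icc 1 2).inf' (Finset.nonempty_Icc.mpr (by omega))
            (fun n => distNearestInt (G n))} (1 / 2) ∧
    IsGreatest {y : ℝ | ∃ G : ℕ → ℝ, (∀ n, 3 ≤ n → G n = G (n - 1) + G (n - 2)) ∧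
      y = (Finset.Icc 1 3).inf' (Finset.nonempty_Icc.mpr (by omega))
            (fun n => distNearestInt (G n))} (1 / 3) ∧
    IsGreatest {y : ℝ | ∃ G : ℕ → ℝ, (∀ n, 3 ≤ n → G n = G (n - 1) + G (n - 2)) ∧
      y = (Finset.Icc 1 4).inf' (Finset.nonempty_Icc.mpr (by omega))
            (fun n => distNearestInt (G n))} (1 / 4) ∧
    IsGreatest {y : ℝ | ∃ G : ℕ → ℝ, (∀ n, 3 ≤ n → G n = G (n - 1) + G (n - 2)) ∧
      y = (Finset.Icc 1 5).inf' (Finset.nonempty_Icc.mpr (by omega))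
            (fun n => distNearestInt (G n))} (1 / 4) := by
  have hrec3 : ∀ (G : ℕ → ℝ), (∀ n, 3 ≤ n → G n = G (n - 1) + G (n - 2)) →
      G 3 = G 1 + G 2 := by
    intro G h
    have := h 3 (by omega)
    norm_num at this
    linarith
  have hrec4 : ∀ (G : ℕ → ℝ), (∀ n, 3 ≤ n → G n = G (n - 1) + G (n - 2)) →
      G 4 = G 1 + G 2 + G 2 := by
    intro G h
    have h3 := hrec3 G h
    have := h 4 (by omega)
    norm_num at this
    linarith
  have fibval : ∀ c : ℝ, ∀ n : ℕ, n ≤ 5 →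
      (fun n => (Nat.fib n : ℝ) / c) n = [0, 1, 1, 2, 3, 5].getD n 0 / c := by
    intro c n hn
    interval_cases n <;> norm_num [Nat.fib]
  refine ⟨⟨⟨fun n => (Nat.fib n : ℝ) / 2, fibG_rec 2, ?_⟩, ?_⟩,
          ⟨⟨fun n => (Nat.fib n : ℝ) / 3, fibG_rec 3, ?_⟩, ?_⟩,
          ⟨⟨fun n => (Nat.fib n : ℝ) / 4, fibG_rec 4, ?_⟩, ?_⟩,
          ⟨⟨fun n => (Nat.fib n : ℝ) / 4, fibG_rec 4, ?_⟩, ?_⟩⟩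
  · -- inf over Icc 1 2 of d(fib n / 2) = 1/2
    refine le_antisymm ?_ ?_
    · apply Finset.le_inf'
      intro n hn
      simp only [Finset.mem_Icc] at hn
      obtain ⟨hn1, hn2⟩ := hn
      interval_cases n <;>
        norm_num [Nat.fib, distNearestInt, round_eq, Int.floor_eq_iff, le_abs, abs_le]
    · exact le_trans (Finset.inf'_le _ (by decide : (1:ℕ) ∈ Finset.Icc 1 2))
        (by norm_num [Nat.fib, distNearestInt, round_eq, Int.floor_eq_iff, le_abs, abs_le])
  · rintro y ⟨G, hG, rfl⟩
    calc (Finset.Icc 1 2).inf' _ (fun n => distNearestInt (G n))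
        ≤ distNearestInt (G 1) := Finset.inf'_le _ (by decide)
      _ ≤ 1 / 2 := dni_half _
  · refine le_antisymm ?_ ?_
    · apply Finset.le_inf'
      intro n hn
      simp only [Finset.mem_Icc] at hn
      obtain ⟨hn1, hn2⟩ := hn
      interval_cases n <;>
        norm_num [Nat.fib, distNearestInt, round_eq, Int.floor_eq_iff, le_abs, abs_le]
    · exact le_trans (Finset.inf'_le _ (by decide : (1:ℕ) ∈ Finset.Icc 1 3))
        (by norm_num [Nat.fib, distNearestInt, round_eq, Int.floor_eq_iff, le_abs, abs_le])
  · rintro y ⟨G, hG, rfl⟩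
    have h3 := hrec3 G hG
    rcases key3 (G 1) (G 2) with h | h | h
    · exact le_trans (Finset.inf'_le _ (by decide : (1:ℕ) ∈ Finset.Icc 1 3)) h
    · exact le_trans (Finset.inf'_le _ (by decide : (2:ℕ) ∈ Finset.Icc 1 3)) h
    · refine le_trans (Finset.inf'_le _ (by decide : (3:ℕ) ∈ Finset.Icc 1 3)) ?_
      rw [h3]; exact h
  · refine le_antisymm ?_ ?_
    · apply Finset.le_inf'
      intro n hn
      simp only [Finset.mem_Icc] at hn
      obtain ⟨hn1, hn2⟩ := hn
      interval_cases n <;>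
        norm_num [Nat.fib, distNearestInt, round_eq, Int.floor_eq_iff, le_abs, abs_le]
    · exact le_trans (Finset.inf'_le _ (by decide : (1:ℕ) ∈ Finset.Icc 1 4))
        (by norm_num [Nat.fib, distNearestInt, round_eq, Int.floor_eq_iff, le_abs, abs_le])
  · rintro y ⟨G, hG, rfl⟩
    have h3 := hrec3 G hG
    have h4 := hrec4 G hG
    rcases key4 (G 1) (G 2) with h | h | h | h
    · exact le_trans (Finset.inf'_le _ (by decide : (1:ℕ) ∈ Finset.Icc 1 4)) h
    · exact le_trans (Finset.inf'_le _ (by decide : (2:ℕ) ∈ Finset.Icc 1 4)) h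
    · refine le_trans (Finset.inf'_le _ (by decide : (3:ℕ) ∈ Finset.Icc 1 4)) ?_
      rw [h3]; exact h
    · refine le_trans (Finset.inf'_le _ (by decide : (4:ℕ) ∈ Finset.Icc 1 4)) ?_
      rw [h4]; exact h
  · refine le_antisymm ?_ ?_
    · apply Finset.le_inf'
      intro n hn
      simp only [Finset.mem_Icc] at hn
      obtain ⟨hn1, hn2⟩ := hn
      interval_cases n <;>
        norm_num [Nat.fib, distNearestInt, round_eq, Int.floor_eq_iff, le_abs, abs_le]
    · exact le_trans (Finset.inf'_le _ (by decide : (1:ℕ) ∈ Finset.Icc 1 5))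
        (by norm_num [Nat.fib, distNearestInt, round_eq, Int.floor_eq_iff, le_abs, abs_le])
  · rintro y ⟨G, hG, rfl⟩
    have h3 := hrec3 G hG
    have h4 := hrec4 G hG
    rcases key4 (G 1) (G 2) with h | h | h | h
    · exact le_trans (Finset.inf'_le _ (by decide : (1:ℕ) ∈ Finset.Icc 1 5)) h
    · exact le_trans (Finset.inf'_le _ (by decide : (2:ℕ) ∈ Finset.Icc 1 5)) h
    · refine le_trans (Finset.inf'_le _ (by decide : (3:ℕ) ∈ Finset.Icc 1 5)) ?_
      rw [h3]; exact h
    · refine le_trans (Finset.inf'_le _ (by decide : (4:ℕ) ∈ Finset.Icc 1 5)) ?_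
      rw [h4]; exact h
end

section
/- For every integer t ≥ 1: F_{4t+2} + 3 = F_{2t−1}·(F_{2t+2} + F_{2t+4}) and T_{4t+2} + 1 = F_{2t−1}·F_{2t+2}; consequently (T_{4t+2}+1)/(F_{4t+2}+3) = F_{2t+2}/(F_{2t+2}+F_{2t+4}) and 1 − 3·(T_{4t+2}+1)/(F_{4t+2}+3) = F_{2t+1}/(F_{2t+2}+F_{2t+4}). -/
/-- `T n = Σ_{k=1}^{⌊n/2⌋} (−1)^{k+1} F_{n−2k}`. -/
def T (n : ℕ) : ℤ := ∑ k ∈ Finset.Icc 1 (n / 2), (-1 : ℤ) ^ (k + 1) * (Nat.fib (n - 2 * k) : ℤ)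

lemma T_eq_range (n : ℕ) :
    T n = ∑ i ∈ Finset.range (n / 2), (-1 : ℤ) ^ i * (Nat.fib (n - 2 * (1 + i)) : ℤ) := by
  unfold T
  rw [← Finset.Ico_add_one_right_eq_Icc, Finset.sum_Ico_eq_sum_range]
  simp only [Nat.add_sub_cancel]
  refine Finset.sum_congr rfl fun i _ => ?_
  have e : 1 + i + 1 = i + 2 := by ring
  rw [e, pow_add]
  ring

lemma Tstep (n : ℕ) : T (n + 2) = (Nat.fib n : ℤ) - T n := by
  rw [T_eq_range, T_eq_range]
  have h2 : (n + 2) / 2 = n / 2 + 1 := by omega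
  rw [h2, Finset.sum_range_succ']
  have h0 : n + 2 - 2 * (1 + 0) = n := by omega
  rw [h0]
  have key : ∀ i ∈ Finset.range (n / 2),
      (-1 : ℤ) ^ (i + 1) * (Nat.fib (n + 2 - 2 * (1 + (i + 1))) : ℤ)
        = -((-1 : ℤ) ^ i * (Nat.fib (n - 2 * (1 + i)) : ℤ)) := by
    intro i _
    have e : n + 2 - 2 * (1 + (i + 1)) = n - 2 * (1 + i) := by omega
    rw [e, pow_succ]; ring
  rw [Finset.sum_congr rfl key, Finset.sum_neg_distrib]
  ring

lemma T4 (t : ℕ) : T (4 * t + 2) = (Nat.fib (2 * t) : ℤ) * (Nat.fib (2 * t + 1) : ℤ) := by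
  induction t with
  | zero => norm_num [T]
  | succ t ih =>
    have e : 4 * (t + 1) + 2 = (4 * t + 2) + 2 + 2 := by ring
    rw [e, Tstep, Tstep, ih]
    have hA := Nat.fib_add (2 * t) (2 * t + 1)
    have hB := Nat.fib_add (2 * t + 1) (2 * t + 2)
    zify at hA hB
    ring_nf at hA hB ⊢
    nlinarith [hA, hB]

lemma cassini (n : ℕ) :
    ((Nat.fib (2 * n + 1) : ℤ)) ^ 2 = (Nat.fib (2 * n) : ℤ) * (Nat.fib (2 * n + 2) : ℤ) + 1 := by
  induction n with
  | zero => norm_num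
  | succ n ih =>
    have h2 := Nat.fib_add_two (n := 2 * n)
    have h3 := Nat.fib_add_two (n := 2 * n + 1)
    have h4 := Nat.fib_add_two (n := 2 * n + 2)
    zify at h2 h3 h4
    ring_nf at h2 h3 h4 ih ⊢
    nlinarith [ih, h2, h3, h4]

theorem max_point_identities (t : ℕ) (ht : 1 ≤ t) :
    (Nat.fib (4 * t + 2) : ℤ) + 3
      = (Nat.fib (2 * t - 1) : ℤ) * ((Nat.fib (2 * t + 2) : ℤ) + (Nat.fib (2 * t + 4) : ℤ)) ∧
    T (4 * t + 2) + 1 = (Nat.fib (2 * t - 1) : ℤ) * (Nat.fib (2 * t + 2) : ℤ) ∧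
    ((T (4 * t + 2) : ℝ) + 1) / ((Nat.fib (4 * t + 2) : ℝ) + 3)
      = (Nat.fib (2 * t + 2) : ℝ) / ((Nat.fib (2 * t + 2) : ℝ) + (Nat.fib (2 * t + 4) : ℝ)) ∧
    1 - 3 * ((T (4 * t + 2) : ℝ) + 1) / ((Nat.fib (4 * t + 2) : ℝ) + 3)
      = (Nat.fib (2 * t + 1) : ℝ) / ((Nat.fib (2 * t + 2) : ℝ) + (Nat.fib (2 * t + 4) : ℝ)) := by
  -- basic fib facts over ℤ
  have hodd : (Nat.fib (2 * t - 1) : ℤ) = (Nat.fib (2 * t + 1) : ℤ) - (Nat.fib (2 * t) : ℤ) := by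
    have h := Nat.fib_add_two (n := 2 * t - 1)
    have e1 : 2 * t - 1 + 2 = 2 * t + 1 := by omega
    have e2 : 2 * t - 1 + 1 = 2 * t := by omega
    rw [e1, e2] at h
    zify at h
    linarith
  have hA := Nat.fib_add (2 * t) (2 * t + 1)
  have h2 := Nat.fib_add_two (n := 2 * t)
  zify at hA h2
  have h3i : (Nat.fib (2 * t + 3) : ℤ) = (Nat.fib (2 * t + 1) : ℤ) + (Nat.fib (2 * t + 2) : ℤ) := by
    rw [show 2 * t + 3 = 2 * t + 1 + 2 from by ring, Nat.fib_add_two,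
      show 2 * t + 1 + 1 = 2 * t + 2 from by ring]
    push_cast; ring
  have h4i : (Nat.fib (2 * t + 4) : ℤ) = (Nat.fib (2 * t + 2) : ℤ) + (Nat.fib (2 * t + 3) : ℤ) := by
    rw [show 2 * t + 4 = 2 * t + 2 + 2 from by ring, Nat.fib_add_two,
      show 2 * t + 2 + 1 = 2 * t + 3 from by ring]
    push_cast; ring
  have hcas := cassini t
  rw [h2] at hcas
  have hfib42 : (Nat.fib (4 * t + 2) : ℤ)
      = (Nat.fib (2 * t) : ℤ) * Nat.fib (2 * t + 1)
        + (Nat.fib (2 * t + 1) : ℤ) * Nat.fib (2 * t + 2) := by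
    ring_nf at hA ⊢; linarith [hA]
  have hT := T4 t
  -- the two integer identities
  have H1 : (Nat.fib (4 * t + 2) : ℤ) + 3
      = (Nat.fib (2 * t - 1) : ℤ) * ((Nat.fib (2 * t + 2) : ℤ) + (Nat.fib (2 * t + 4) : ℤ)) := by
    rw [hodd, hfib42, h4i, h3i, h2]
    linear_combination (-3 : ℤ) * hcas
  have H2 : T (4 * t + 2) + 1 = (Nat.fib (2 * t - 1) : ℤ) * (Nat.fib (2 * t + 2) : ℤ) := by
    rw [hT, hodd, h2]
    linear_combination (-1 : ℤ) * hcas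
  have c1 : ((Nat.fib (4 * t + 2) : ℝ)) + 3
      = (Nat.fib (2 * t - 1) : ℝ) * ((Nat.fib (2 * t + 2) : ℝ) + (Nat.fib (2 * t + 4) : ℝ)) := by
    exact_mod_cast congrArg (fun z : ℤ => (z : ℝ)) H1
  have c2 : ((T (4 * t + 2) : ℝ)) + 1
      = (Nat.fib (2 * t - 1) : ℝ) * (Nat.fib (2 * t + 2) : ℝ) := by
    exact_mod_cast congrArg (fun z : ℤ => (z : ℝ)) H2
  have hcpos : (0 : ℝ) < (Nat.fib (2 * t - 1) : ℝ) := by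
    have : 0 < Nat.fib (2 * t - 1) := Nat.fib_pos.mpr (by omega)
    exact_mod_cast this
  have hSpos : (0 : ℝ) < (Nat.fib (2 * t + 2) : ℝ) + (Nat.fib (2 * t + 4) : ℝ) := by
    have h1 : 0 < Nat.fib (2 * t + 2) := Nat.fib_pos.mpr (by omega)
    have h1' : (0 : ℝ) < (Nat.fib (2 * t + 2) : ℝ) := by exact_mod_cast h1
    have h2' : (0 : ℝ) ≤ (Nat.fib (2 * t + 4) : ℝ) := by positivity
    linarith
  have h3' : (Nat.fib (2 * t + 3) : ℝ) = (Nat.fib (2 * t + 1) : ℝ) + (Nat.fib (2 * t + 2) : ℝ) := by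
    rw [show 2 * t + 3 = 2 * t + 1 + 2 from by ring, Nat.fib_add_two,
      show 2 * t + 1 + 1 = 2 * t + 2 from by ring]
    push_cast; ring
  have h4' : (Nat.fib (2 * t + 4) : ℝ) = (Nat.fib (2 * t + 2) : ℝ) + (Nat.fib (2 * t + 3) : ℝ) := by
    rw [show 2 * t + 4 = 2 * t + 2 + 2 from by ring, Nat.fib_add_two,
      show 2 * t + 2 + 1 = 2 * t + 3 from by ring]
    push_cast; ring
  refine ⟨H1, H2, ?_, ?_⟩
  · rw [c1, c2, mul_div_mul_left _ _ (ne_of_gt hcpos)]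
  · rw [c1, c2]
    have hc := ne_of_gt hcpos
    have hS := ne_of_gt hSpos
    field_simp
    rw [h4', h3']
    ring
end
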